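/- Let k(u) be a finite separable field extension of k generated by an element u, of degree p^g·h where p is a prime not dividing h and g ≥ 1. Then there exist finite separable extensions M₁ ⊇ M₂ ⊇ k such that: (1) k(u) ⊆ M₁ and M₁ = M₂(u); (2) [M₁ : M₂] = p and p does not divide [M₁ : k(u)]. -/

import Mathlib

universe u

set_option synthInstance.maxHeartbeats 1000000
set_option maxHeartbeats 1000000


/-- **folklore.** Let `k(u)` be a finite separable extension of `k`
generated by an element `u` (of a separable closure `Ω` of `k`), of degree
`p^g·h` where `p` is a prime not dividing `h` and `g ≥ 1`.  Then there exist finite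
separable extensions `M₁ ⊇ M₂ ⊇ k` such that `k(u) ⊆ M₁`, `M₁ = M₂(u)`,
`[M₁ : M₂] = p` (expressed by `[M₁ : k] = p·[M₂ : k]`) and `p ∤ [M₁ : k(u)]`
(expressed by `[M₁ : k] = [k(u) : k]·d` with `p ∤ d`). -/
theorem statement_7 (k Ω : Type u) [Field k] [Field Ω] [Algebra k Ω]
    [IsSepClosure k Ω] (u : Ω) (p g h : ℕ) (hp : p.Prime) (hph : ¬ p ∣ h)
    (hg : 1 ≤ g)
    (hdeg : Module.finrank k (IntermediateField.adjoin k {u}) = p ^ g * h) :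
    ∃ M₁ M₂ : IntermediateField k Ω,
      M₂ ≤ M₁ ∧
      IntermediateField.adjoin k {u} ≤ M₁ ∧
      M₁ = M₂ ⊔ IntermediateField.adjoin k {u} ∧
      FiniteDimensional k ↥M₁ ∧
      Module.finrank k ↥M₁ = p * Module.finrank k ↥M₂ ∧
      ∃ d : ℕ, ¬ p ∣ d ∧
        Module.finrank k ↥M₁ =
          Module.finrank k ↥(IntermediateField.adjoin k {u}) * d := by
  classical
  haveI := Fact.mk hp
  set A : IntermediateField k Ω := IntermediateField.adjoin k {u} with hA
  have hu : IsIntegral k u := Algebra.IsIntegral.isIntegral u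
  haveI : FiniteDimensional k ↥A := IntermediateField.adjoin.finiteDimensional hu
  set L : IntermediateField k Ω := IntermediateField.normalClosure k ↥A Ω with hL
  have hAL : A ≤ L := IntermediateField.le_normalClosure A
  haveI : FiniteDimensional k ↥L := by
    unfold L; infer_instance
  haveI : Algebra.IsSeparable k ↥L := Algebra.isSeparable_tower_bot_of_isSeparable k ↥L Ω
  haveI : Normal k ↥L := by unfold L; infer_instance
  haveI : IsGalois k ↥L := ⟨⟩
  have huL : u ∈ L := hAL (IntermediateField.subset_adjoin k {u} rfl)
  set u' : ↥L := ⟨u, huL⟩ with hu'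
  set A' : IntermediateField k ↥L := IntermediateField.adjoin k {u'} with hA'
  have hmapA : A'.map L.val = A := by
    rw [hA', IntermediateField.adjoin_map, Set.image_singleton]
    rfl
  -- the Galois group
  set G := (↥L ≃ₐ[k] ↥L) with hG
  -- general degree lemma
  have key : ∀ R : Subgroup G,
      Module.finrank k ↥(IntermediateField.fixedField R) * Nat.card R = Nat.card G := by
    intro R
    rw [
      ← IntermediateField.finrank_fixedField_eq_card, IsGalois.card_aut_eq_finrank]
    exact Module.finrank_mul_finrank k ↥(IntermediateField.fixedField R) ↥L
  set H : Subgroup G := A'.fixingSubgroup with hH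
  have hffH : IntermediateField.fixedField H = A' := IsGalois.fixedField_fixingSubgroup A'
  have hfrA' : Module.finrank k ↥A' = p ^ g * h := by
    rw [← hdeg]
    exact (LinearEquiv.finrank_eq
      (IntermediateField.equivMap A' L.val).toLinearEquiv).trans (by rw [hmapA])
  have hkeyH : p ^ g * h * Nat.card H = Nat.card G := by
    have h0 := key H
    rw [hffH, hfrA'] at h0
    exact h0
  -- Sylow p-subgroup of H
  obtain ⟨P₀⟩ : Nonempty (Sylow p ↥H) := inferInstance
  obtain ⟨a, hPa⟩ : ∃ a, Nat.card ↥(P₀ : Subgroup ↥H) = p ^ a :=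
    (IsPGroup.iff_card).mp P₀.isPGroup'
  set d : ℕ := (P₀ : Subgroup ↥H).index with hd
  have hpd : ¬ p ∣ d := P₀.not_dvd_index
  have hcardH : p ^ a * d = Nat.card ↥H := by
    rw [← hPa]; exact Subgroup.card_mul_index _
  set P : Subgroup G := (P₀ : Subgroup ↥H).map H.subtype with hP
  have hPH : P ≤ H := Subgroup.map_subtype_le _
  have hcardP : Nat.card P = p ^ a := by
    rw [← hPa]
    exact (Nat.card_congr (Subgroup.equivMapOfInjective _ _ H.subtype_injective).toEquiv).symm
  -- find Q with P ≤ Q, |Q| = p^(a+1)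
  have hdvd : p ^ (a + 1) ∣ Nat.card G := by
    have : Nat.card G = p ^ (a + g) * (h * d) := by
      rw [← hkeyH, ← hcardH, pow_add]; ring
    rw [this]
    exact Dvd.dvd.mul_right (pow_dvd_pow p (by omega)) _
  obtain ⟨Q, hQcard, hPQ⟩ := Sylow.exists_subgroup_card_pow_succ hdvd hcardP
  -- Q ⊓ H = P
  have hQH : Q ⊓ H = P := by
    refine (Subgroup.eq_of_le_of_card_ge (le_inf hPQ hPH) ?_).symm
    obtain ⟨j, hj, hcard⟩ := (Nat.dvd_prime_pow hp).mp
      (hQcard ▸ Subgroup.card_dvd_of_le (inf_le_left : Q ⊓ H ≤ Q))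
    have hdvdH : p ^ j ∣ p ^ a * d := by
      rw [hcardH, ← hcard]
      exact Subgroup.card_dvd_of_le inf_le_right
    have hja : p ^ j ∣ p ^ a :=
      (Nat.Coprime.dvd_of_dvd_mul_right
        (Nat.Coprime.pow_left j ((Nat.Prime.coprime_iff_not_dvd hp).mpr hpd)) hdvdH)
    rw [hcard, hcardP]
    exact Nat.le_of_dvd (pow_pos hp.pos a) hja
  -- define the fields inside L
  set M₁' : IntermediateField k ↥L := IntermediateField.fixedField P with hM₁'
  set M₂' : IntermediateField k ↥L := IntermediateField.fixedField Q with hM₂'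
  have hfixP : M₁'.fixingSubgroup = P := IntermediateField.fixingSubgroup_fixedField P
  have hfixQ : M₂'.fixingSubgroup = Q := IntermediateField.fixingSubgroup_fixedField Q
  have ffantitone : ∀ {R S : Subgroup G}, R ≤ S →
      IntermediateField.fixedField S ≤ IntermediateField.fixedField R := by
    intro R S hRS x hx g
    exact hx ⟨g.1, hRS g.2⟩
  have fsantitone : ∀ {K K' : IntermediateField k ↥L}, K ≤ K' →
      K'.fixingSubgroup ≤ K.fixingSubgroup := by
    intro K K' hKK' g hg x
    exact hg ⟨x.1, hKK' x.2⟩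
  have hM21 : M₂' ≤ M₁' := ffantitone hPQ
  have hAM1 : A' ≤ M₁' := (IntermediateField.le_iff_le P A').mpr hPH
  have hsup : M₁' = M₂' ⊔ A' := by
    refine le_antisymm ?_ (sup_le hM21 hAM1)
    have h1 : (M₂' ⊔ A').fixingSubgroup ≤ P := by
      rw [← hQH]
      exact le_inf (hfixQ ▸ fsantitone le_sup_left) (fsantitone le_sup_right)
    calc M₁' = IntermediateField.fixedField P := hM₁'
      _ ≤ IntermediateField.fixedField (M₂' ⊔ A').fixingSubgroup := ffantitone h1
      _ = M₂' ⊔ A' := IsGalois.fixedField_fixingSubgroup _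
  -- degree identities inside L
  have hk1 : Module.finrank k ↥M₁' * p ^ a = Nat.card G := by
    rw [← hcardP]; exact key P
  have hk2 : Module.finrank k ↥M₂' * p ^ (a + 1) = Nat.card G := by
    rw [← hQcard]; exact key Q
  have hdeg1 : Module.finrank k ↥M₁' = p * Module.finrank k ↥M₂' := by
    have hpa : p ^ a ≠ 0 := pow_ne_zero a hp.pos.ne'
    apply Nat.eq_of_mul_eq_mul_right (Nat.pos_of_ne_zero hpa)
    rw [hk1, ← hk2, pow_succ]; ring
  have hdeg2 : Module.finrank k ↥M₁' = Module.finrank k ↥A' * d := by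
    have hpa : p ^ a ≠ 0 := pow_ne_zero a hp.pos.ne'
    apply Nat.eq_of_mul_eq_mul_right (Nat.pos_of_ne_zero hpa)
    have : Module.finrank k ↥A' * Nat.card ↥H = Nat.card G := by
      rw [← hffH]; exact key H
    rw [hk1, ← this, ← hcardH]; ring
  -- map everything to Ω
  refine ⟨M₁'.map L.val, M₂'.map L.val, IntermediateField.map_mono _ hM21, ?_, ?_, ?_, ?_, d, hpd, ?_⟩
  · rw [← hmapA]; exact IntermediateField.map_mono _ hAM1
  · rw [← hmapA, hsup, IntermediateField.map_sup]
  · exact LinearEquiv.finiteDimensional (IntermediateField.equivMap M₁' L.val).toLinearEquiv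
  · rw [← LinearEquiv.finrank_eq (IntermediateField.equivMap M₁' L.val).toLinearEquiv,
      ← LinearEquiv.finrank_eq (IntermediateField.equivMap M₂' L.val).toLinearEquiv]
    exact hdeg1
  · rw [← LinearEquiv.finrank_eq (IntermediateField.equivMap M₁' L.val).toLinearEquiv,
      ← hmapA, ← LinearEquiv.finrank_eq (IntermediateField.equivMap A' L.val).toLinearEquiv]
    exact hdeg2
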